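/- arXiv:1809.08414 — 4 statements merged into one kernel-verified Lean document; each statement's English description precedes it below -/
import Mathlib

section
/- Let V be a complex vector space of dimension at least 2k-1 for some k ≥ 2, and let ψ_{k-1}, ψ_k : V → V be invertible linear operators such that ψ_{k-1}(W_{k-1}) ⊆ ψ_k(W_k) for every pair of subspaces W_{k-1} ⊆ W_k of V with dim W_{k-1} = k-1 and dim W_k = k. Then ψ_{k-1} = c · ψ_k for some nonzero scalar c ∈ ℂ. -/
open Submodule Set Cardinal

/-- Construction lemma: given a linearly independent pair `{v, u}` in a space of rank at
least `k+1`, there are subspaces `W ≤ W'` of dimensions `k-1`, `k` with `v ∈ W`, `u ∉ W'`. -/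
lemma exists_flag_aux {V : Type*} [AddCommGroup V] [Module ℂ V] {k : ℕ} (hk : 2 ≤ k)
    (hdim : ((k + 1 : ℕ) : Cardinal) ≤ Module.rank ℂ V) {v u : V} (hvu : v ≠ u)
    (hli : LinearIndependent ℂ ((↑) : ({v, u} : Set V) → V)) :
    ∃ W W' : Submodule ℂ V, W ≤ W' ∧ Module.finrank ℂ W = k - 1 ∧
      Module.finrank ℂ W' = k ∧ v ∈ W ∧ u ∉ W' := by
  classical
  set t : Set V := LinearIndepOn.extend (show LinearIndepOn ℂ id ({v, u} : Set V) from hli) (Set.subset_univ _) with ht_def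
  have hsub : ({v, u} : Set V) ⊆ t := LinearIndepOn.subset_extend (show LinearIndepOn ℂ id ({v, u} : Set V) from hli) _
  have hti : LinearIndependent ℂ ((↑) : t → V) := LinearIndepOn.linearIndepOn_extend (show LinearIndepOn ℂ id ({v, u} : Set V) from hli) _
  have hut : u ∈ t := hsub (by simp)
  have hvt : v ∈ t := hsub (by simp)
  -- cardinality of t
  have hcard : ((k + 1 : ℕ) : Cardinal) ≤ #t := by
    have B := Module.Basis.extend (show LinearIndepOn ℂ id ({v, u} : Set V) from hli)
    have : #(LinearIndepOn.extend (show LinearIndepOn ℂ id ({v, u} : Set V) from hli) (Set.subset_univ _)) = Module.rank ℂ V := B.mk_eq_rank''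
    rw [ht_def, this]; exact hdim
  have hpairfin : ({v, u} : Set V).Finite := (Set.finite_singleton u).insert v
  have hpaircard : ({v, u} : Set V).ncard ≤ k + 1 := by
    have h2 : ({v, u} : Set V).ncard ≤ 2 :=
      le_trans (Set.ncard_insert_le _ _) (by simp)
    omega
  -- find S with {v,u} ⊆ S ⊆ t, S.ncard = k + 1
  obtain ⟨S, hvuS, hSt, hScard⟩ : ∃ S, ({v, u} : Set V) ⊆ S ∧ S ⊆ t ∧ S.ncard = k + 1 := by
    rcases t.finite_or_infinite with htf | hinf
    · have htn : k + 1 ≤ t.ncard := by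
        have h1 : ((k + 1 : ℕ) : Cardinal) ≤ #t := hcard
        have h2 : (#t).toNat = t.ncard := by
          rw [← Nat.card_coe_set_eq]; rfl
        have h3 : #t < Cardinal.aleph0 := htf.lt_aleph0
        have h4 := Cardinal.toNat_le_toNat h1 h3
        rwa [Cardinal.toNat_natCast, h2] at h4
      exact Set.exists_subsuperset_card_eq hsub hpaircard htn
    · exact hinf.exists_superset_ncard_eq hsub hpairfin hpaircard
  have hSfin : S.Finite := by
    apply Set.finite_of_ncard_ne_zero; omega
  have hvS : v ∈ S := hvuS (by simp)
  have huS : u ∈ S := hvuS (by simp)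
  -- pick an element x₀ of S different from v, u
  obtain ⟨x₀, hx₀S, hx₀⟩ : ∃ x₀ ∈ S, x₀ ∉ ({v, u} : Set V) := by
    by_contra hc
    push_neg at hc
    have : S ⊆ ({v, u} : Set V) := fun x hx => hc x hx
    have hle := Set.ncard_le_ncard this hpairfin
    have h2 : ({v, u} : Set V).ncard ≤ 2 :=
      le_trans (Set.ncard_insert_le _ _) (by simp)
    omega
  have hx₀v : x₀ ≠ v := by intro hh; exact hx₀ (by simp [hh])
  have hx₀u : x₀ ≠ u := by intro hh; exact hx₀ (by simp [hh])
  -- define the two spanning sets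
  set S' : Set V := S \ {u} with hS'_def
  set S'' : Set V := S' \ {x₀} with hS''_def
  have hS'fin : S'.Finite := hSfin.diff
  have hS''fin : S''.Finite := hS'fin.diff
  have hS't : S' ⊆ t := (Set.diff_subset).trans hSt
  have hS''S' : S'' ⊆ S' := Set.diff_subset
  have hS'card : S'.ncard = k := by
    rw [hS'_def, Set.ncard_diff_singleton_of_mem huS, hScard]
    omega
  have hx₀S' : x₀ ∈ S' := ⟨hx₀S, by simp [hx₀u]⟩
  have hS''card : S''.ncard = k - 1 := by
    rw [hS''_def, Set.ncard_diff_singleton_of_mem hx₀S', hS'card]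
  have hvS' : v ∈ S' := ⟨hvS, by simp [hvu]⟩
  have hvS'' : v ∈ S'' := ⟨hvS', by simp [Ne.symm hx₀v]⟩
  -- independence of the subsets of t
  have hindS' : LinearIndependent ℂ ((↑) : S' → V) := LinearIndepOn.mono (show LinearIndepOn ℂ id t from hti) hS't
  have hindS'' : LinearIndependent ℂ ((↑) : S'' → V) := LinearIndepOn.mono (show LinearIndepOn ℂ id t from hti) (hS''S'.trans hS't)
  -- finranks
  haveI : Fintype S' := hS'fin.fintype
  haveI : Fintype S'' := hS''fin.fintype
  have hfr' : Module.finrank ℂ (span ℂ S') = k := by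
    rw [finrank_span_set_eq_card hindS', ← Set.ncard_eq_toFinset_card', hS'card]
  have hfr'' : Module.finrank ℂ (span ℂ S'') = k - 1 := by
    rw [finrank_span_set_eq_card hindS'', ← Set.ncard_eq_toFinset_card', hS''card]
  -- u is not in span S'
  have hu_not : u ∉ span ℂ S' := by
    intro hmem
    have himg : (↑) '' {x : t | (x : V) ≠ u} = t \ {u} := by
      ext y
      simp only [Set.mem_image, Set.mem_setOf_eq, Set.mem_diff, Set.mem_singleton_iff]
      constructor
      · rintro ⟨⟨z, hz⟩, hne, rfl⟩; exact ⟨hz, hne⟩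
      · rintro ⟨hy, hne⟩; exact ⟨⟨y, hy⟩, hne, rfl⟩
    have hnot : (⟨u, hut⟩ : t) ∉ {x : t | (x : V) ≠ u} := by simp
    have := hti.notMem_span_image hnot
    rw [himg] at this
    apply this
    refine span_mono ?_ hmem
    intro y hy
    exact ⟨hS't hy, hy.2⟩
  exact ⟨span ℂ S'', span ℂ S', span_mono hS''S', hfr'', hfr', subset_span hvS'', hu_not⟩

/-- Lemma 1 of the paper: if invertible operators `ψ₁, ψ₂` on a complex vector space of
dimension at least `2k-1` (`k ≥ 2`) satisfy `ψ₁(W_{k-1}) ⊆ ψ₂(W_k)` for every pair of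
subspaces `W_{k-1} ⊆ W_k` of dimensions `k-1` and `k`, then `ψ₁ = c • ψ₂` for some `c ≠ 0`. -/
theorem stmt0 {V : Type*} [AddCommGroup V] [Module ℂ V] (k : ℕ) (hk : 2 ≤ k)
    (hdim : ((2 * k - 1 : ℕ) : Cardinal) ≤ Module.rank ℂ V)
    (ψ₁ ψ₂ : V ≃ₗ[ℂ] V)
    (h : ∀ W W' : Submodule ℂ V, W ≤ W' → Module.finrank ℂ W = k - 1 →
      Module.finrank ℂ W' = k → W.map (ψ₁ : V →ₗ[ℂ] V) ≤ W'.map (ψ₂ : V →ₗ[ℂ] V)) :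
    ∃ c : ℂ, c ≠ 0 ∧ ∀ v : V, ψ₁ v = c • ψ₂ v := by
  classical
  set φ : V ≃ₗ[ℂ] V := ψ₁.trans ψ₂.symm with hφ_def
  have hφ : ∀ x : V, φ x = ψ₂.symm (ψ₁ x) := fun x => rfl
  have hdim' : ((k + 1 : ℕ) : Cardinal) ≤ Module.rank ℂ V := by
    refine le_trans ?_ hdim
    have hh : k + 1 ≤ 2 * k - 1 := by omega
    exact_mod_cast hh
  -- key step: every vector is mapped into its own span by φ
  have key : ∀ v : V, φ v ∈ span ℂ ({v} : Set V) := by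
    intro v
    by_cases hv : v = 0
    · subst hv; simp
    by_contra hns
    -- then {v, φ v} is linearly independent
    have hvu : v ≠ φ v := by
      intro he
      exact hns (he ▸ subset_span (by simp))
    have hli : LinearIndependent ℂ ((↑) : ({v, φ v} : Set V) → V) := by
      refine linearIndepOn_id_pair hv ?_
      intro a ha
      exact hns (ha ▸ smul_mem _ a (subset_span (by simp)))
    obtain ⟨W, W', hWW', hfrW, hfrW', hvW, hunW'⟩ := exists_flag_aux hk hdim' hvu hli
    have hmap := h W W' hWW' hfrW hfrW'
    have hin : ψ₁ v ∈ W.map (ψ₁ : V →ₗ[ℂ] V) := ⟨v, hvW, rfl⟩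
    obtain ⟨w', hw', hww'⟩ := hmap hin
    apply hunW'
    have : φ v = w' := by
      rw [hφ, ← hww']
      exact ψ₂.symm_apply_apply w'
    rwa [this]
  -- every nonzero vector is an eigenvector
  have eig : ∀ v : V, ∃ c : ℂ, φ v = c • v := by
    intro v
    obtain ⟨c, hc⟩ := mem_span_singleton.mp (key v)
    exact ⟨c, hc.symm⟩
  -- V is nontrivial
  have hnt : ∃ v₀ : V, v₀ ≠ 0 := by
    rw [← rank_pos_iff_exists_ne_zero (R := ℂ)]
    refine lt_of_lt_of_le ?_ hdim
    have : (0 : Cardinal) < ((2 * k - 1 : ℕ) : Cardinal) := by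
      exact_mod_cast Nat.pos_of_ne_zero (by omega)
    exact this
  obtain ⟨v₀, hv₀⟩ := hnt
  obtain ⟨c₀, hc₀⟩ := eig v₀
  have hc₀ne : c₀ ≠ 0 := by
    intro h0
    apply hv₀
    apply φ.injective
    rw [map_zero, hc₀, h0, zero_smul]
  -- φ = c₀ • id
  have hall : ∀ v : V, φ v = c₀ • v := by
    intro v
    by_cases hvs : v ∈ span ℂ ({v₀} : Set V)
    · obtain ⟨a, ha⟩ := mem_span_singleton.mp hvs
      rw [← ha, map_smul, hc₀, smul_comm]
    · obtain ⟨c, hc⟩ := eig v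
      obtain ⟨c', hc'⟩ := eig (v + v₀)
      have hexp : c • v + c₀ • v₀ = c' • v + c' • v₀ := by
        rw [← hc, ← hc₀, ← map_add, hc', smul_add]
      have hsub : (c - c') • v = (c' - c₀) • v₀ := by
        rw [sub_smul, sub_smul, sub_eq_sub_iff_add_eq_add, hexp, add_comm]
      have hcc' : c = c' := by
        by_contra hne
        apply hvs
        have : v = (c - c')⁻¹ • ((c' - c₀) • v₀) := by
          rw [← hsub, smul_smul, inv_mul_cancel₀ (sub_ne_zero.mpr hne), one_smul]
        rw [this]
        exact smul_mem _ _ (smul_mem _ _ (subset_span (by simp)))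
      have hc'c₀ : c' = c₀ := by
        rw [hcc'] at hsub
        simp only [sub_self, zero_smul] at hsub
        have h0 : (c' - c₀) • v₀ = 0 := hsub.symm
        rcases smul_eq_zero.mp h0 with hz | hz
        · exact sub_eq_zero.mp hz
        · exact absurd hz hv₀
      rw [hc, hcc', hc'c₀]
  refine ⟨c₀, hc₀ne, fun v => ?_⟩
  have := hall v
  rw [hφ] at this
  calc ψ₁ v = ψ₂ (ψ₂.symm (ψ₁ v)) := (ψ₂.apply_symm_apply _).symm
    _ = ψ₂ (c₀ • v) := by rw [this]
    _ = c₀ • ψ₂ v := map_smul _ _ _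
end

section
/- Let V be a countable-dimensional vector space over ℂ with basis E, F_E^n = span{e_1,...,e_n}, GL(E,V) the group of automorphisms fixing all but finitely many e_i, and B_E the stabilizer in GL(V) of the flag (F_E^n)_n. Suppose g ∈ GL(V) maps Fl(F_E,E,V) to itself, i.e., for every flag F' ∈ Fl(F_E,E,V) the flag g(F') is again in Fl(F_E,E,V). Then g ∈ GL(E,V)·B_E, i.e., g = h·b for some product of elements of GL(E,V) and B_E. -/
open Submodule Set

/-- If `g ∈ GL(V)` maps every flag of `Fl(F_E,E,V)` to a flag of `Fl(F_E,E,V)`, then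
`g = h ∘ b` with `h ∈ GL(E,V)` (fixing all but finitely many `e i`) and `b ∈ B_E`
(stabilizing every `F_E^n`). -/
theorem stmt10 {V : Type*} [AddCommGroup V] [Module ℂ V] (e : Module.Basis ℕ ℂ V) (g : V ≃ₗ[ℂ] V)
    (hyp : ∀ F' : ℕ → Submodule ℂ V,
      (∀ k, F' k ≤ F' (k + 1)) → (∀ k, Module.finrank ℂ (F' k) = k) →
      (∃ N, ∀ n ≥ N, F' n = Submodule.span ℂ (e '' {i | i < n})) →
      ((∀ k, (F' k).map (g : V →ₗ[ℂ] V) ≤ (F' (k + 1)).map (g : V →ₗ[ℂ] V)) ∧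
       (∀ k, Module.finrank ℂ ((F' k).map (g : V →ₗ[ℂ] V)) = k) ∧
       ∃ N, ∀ n ≥ N, (F' n).map (g : V →ₗ[ℂ] V) = Submodule.span ℂ (e '' {i | i < n}))) :
    ∃ h b : V ≃ₗ[ℂ] V,
      {i : ℕ | h (e i) ≠ e i}.Finite ∧
      (∀ n : ℕ, (Submodule.span ℂ (e '' {i | i < n})).map (b : V →ₗ[ℂ] V) =
        Submodule.span ℂ (e '' {i | i < n})) ∧
      ∀ v : V, g v = h (b v) := by
  classical
  set F : ℕ → Submodule ℂ V := fun n => Submodule.span ℂ (e '' {i | i < n}) with hFdef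
  have hrank : ∀ n, Module.finrank ℂ (F n) = n := by
    intro n
    have hli : LinearIndependent ℂ (fun i : Fin n => e (i : ℕ)) :=
      e.linearIndependent.comp Fin.val Fin.val_injective
    have hr : Set.range (fun i : Fin n => e (i : ℕ)) = e '' {i | i < n} := by
      ext x
      constructor
      · rintro ⟨i, rfl⟩; exact ⟨i, i.isLt, rfl⟩
      · rintro ⟨i, hi, rfl⟩; exact ⟨⟨i, hi⟩, rfl⟩
    have := finrank_span_eq_card hli
    rw [hr] at this
    simpa using this
  have hmono : ∀ k, F k ≤ F (k + 1) := fun k =>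
    Submodule.span_mono (Set.image_mono (fun i hi => lt_trans hi (Nat.lt_succ_self k)))
  obtain ⟨-, -, N, hN⟩ := hyp F hmono hrank ⟨0, fun n _ => rfl⟩
  -- g(F n) = F n for n ≥ N
  have hgF : ∀ n, N ≤ n → (F n).map (g : V →ₗ[ℂ] V) = F n := fun n hn => hN n hn
  -- map of span computations
  have hmapspan : ∀ (f : V →ₗ[ℂ] V) (s : Set ℕ),
      (Submodule.span ℂ (e '' s)).map f = Submodule.span ℂ ((fun i => f (e i)) '' s) := by
    intro f s
    rw [Submodule.map_span, Set.image_image]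
  have hFN : Submodule.span ℂ ((fun i => g (e i)) '' {i | i < N}) = F N := by
    have h0 := hgF N le_rfl
    rw [hmapspan] at h0
    exact h0
  -- the new basis family
  set v : ℕ → V := fun i => if i < N then g (e i) else e i with hvdef
  have hvindep : LinearIndependent ℂ v := by
    rw [← linearIndependent_equiv (Equiv.sumCompl (fun i => i < N))]
    rw [linearIndependent_sum]
    have h1 : (v ∘ (Equiv.sumCompl (fun i => i < N))) ∘ Sum.inl
        = fun i : {i // i < N} => g (e (i : ℕ)) := by
      funext i; simp [hvdef, i.2]
    have h2 : (v ∘ (Equiv.sumCompl (fun i => i < N))) ∘ Sum.inr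
        = fun i : {i // ¬ i < N} => e (i : ℕ) := by
      funext i; simp [hvdef, i.2]
    refine ⟨?_, ?_, ?_⟩
    · rw [h1]
      exact (e.linearIndependent.comp Subtype.val Subtype.val_injective).map'
        (g : V →ₗ[ℂ] V) g.ker
    · rw [h2]
      exact e.linearIndependent.comp Subtype.val Subtype.val_injective
    · rw [h1, h2]
      have hr1 : Set.range (fun i : {i // i < N} => g (e (i : ℕ)))
          = (fun i => g (e i)) '' {i | i < N} := by
        ext x
        constructor
        · rintro ⟨i, rfl⟩; exact ⟨i, i.2, rfl⟩
        · rintro ⟨i, hi, rfl⟩; exact ⟨⟨i, hi⟩, rfl⟩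
      have hr2 : Set.range (fun i : {i // ¬ i < N} => e (i : ℕ)) = e '' {i | ¬ i < N} := by
        ext x
        constructor
        · rintro ⟨i, rfl⟩; exact ⟨i, i.2, rfl⟩
        · rintro ⟨i, hi, rfl⟩; exact ⟨⟨i, hi⟩, rfl⟩
      rw [hr1, hr2, hFN, hFdef]
      exact e.linearIndependent.disjoint_span_image (by
        simp [Set.disjoint_left])
  have hvspan : ⊤ ≤ Submodule.span ℂ (Set.range v) := by
    rw [← e.span_eq]
    refine Submodule.span_le.2 ?_
    rintro x ⟨i, rfl⟩
    by_cases hi : i < N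
    · have : e i ∈ F N := Submodule.subset_span ⟨i, hi, rfl⟩
      have hle : F N ≤ Submodule.span ℂ (Set.range v) := by
        rw [← hFN]
        refine Submodule.span_mono ?_
        rintro x ⟨j, hj, rfl⟩
        exact ⟨j, by simp only [hvdef]; rw [if_pos (show j < N from hj)]⟩
      exact hle this
    · exact Submodule.subset_span ⟨i, by simp [hvdef, hi]⟩
  let bv : Module.Basis ℕ ℂ V := Module.Basis.mk hvindep hvspan
  let h : V ≃ₗ[ℂ] V := e.equiv bv (Equiv.refl ℕ)
  have hhe : ∀ i, h (e i) = v i := by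
    intro i
    simp [h, bv, Module.Basis.equiv_apply, Module.Basis.mk_apply]
  let b : V ≃ₗ[ℂ] V := g.trans h.symm
  -- map under h
  have hmaph : ∀ n, (F n).map (h : V →ₗ[ℂ] V) = Submodule.span ℂ (v '' {i | i < n}) := by
    intro n
    rw [hFdef, hmapspan]
    congr 1
    exact Set.image_congr (fun i _ => hhe i)
  have hinv : ∀ (p : Submodule ℂ V) (f : V ≃ₗ[ℂ] V),
      (p.map (f : V →ₗ[ℂ] V)).map (f.symm : V →ₗ[ℂ] V) = p := by
    intro p f
    rw [← Submodule.map_comp]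
    simp
  refine ⟨h, b, ?_, ?_, ?_⟩
  · refine (Set.finite_Iio N).subset ?_
    intro i hi
    by_contra hlt
    simp only [Set.mem_Iio, not_lt] at hlt
    exact hi (by rw [hhe i]; simp [hvdef, Nat.not_lt.2 hlt])
  · intro n
    have hcomp : (F n).map (b : V →ₗ[ℂ] V)
        = ((F n).map (g : V →ₗ[ℂ] V)).map (h.symm : V →ₗ[ℂ] V) := by
      rw [← Submodule.map_comp]; rfl
    rcases le_or_gt n N with hn | hn
    · have : (F n).map (g : V →ₗ[ℂ] V) = (F n).map (h : V →ₗ[ℂ] V) := by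
        rw [hmaph, hFdef, hmapspan]
        congr 1
        refine Set.image_congr ?_
        intro i hi
        simp [hvdef, lt_of_lt_of_le hi hn]
      rw [hcomp, this, hinv]
    · have hgn := hgF n hn.le
      have hhn : (F n).map (h : V →ₗ[ℂ] V) = F n := by
        rw [hmaph]
        have hsplit : {i | i < n} = {i | i < N} ∪ {i | N ≤ i ∧ i < n} := by
          ext i
          simp only [Set.mem_setOf_eq, Set.mem_union]
          omega
        have hFn : F n = Submodule.span ℂ (e '' {i | i < N})
            ⊔ Submodule.span ℂ (e '' {i | N ≤ i ∧ i < n}) := by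
          show Submodule.span ℂ (e '' {i | i < n}) = _
          rw [hsplit, Set.image_union, Submodule.span_union]
        rw [hFn, hsplit, Set.image_union, Submodule.span_union]
        congr 1
        · have hv1 : v '' {i | i < N} = (fun i => g (e i)) '' {i | i < N} :=
            Set.image_congr (fun i hi => by simp only [hvdef]; rw [if_pos (show i < N from hi)])
          rw [hv1, hFN]
        · congr 1
          exact Set.image_congr (fun i hi => by simp [hvdef, Nat.not_lt.2 hi.1])
      have : (F n).map (h.symm : V →ₗ[ℂ] V) = F n := by
        conv_lhs => rw [← hhn]
        exact hinv _ _
      rw [hcomp, hgn, this]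
  · intro x
    show g x = h (h.symm (g x))
    simp
end

section
/- Let V be a countable-dimensional vector space over a field with basis E = {e_1, e_2, ...}, and let GL(E,V) be the group of automorphisms of V fixing all but finitely many e_i. Then GL(E,V) acts transitively on Fl(F_E,E,V): for any two chains F', F'' ∈ Fl(F_E,E,V) there exists g ∈ GL(E,V) with g(F'^k) = F''^k for all k ≥ 1. -/
open Submodule Set

/-- Auxiliary: from a flag as in `stmt11` extract an adapted basis family that agrees
with `e` off a finite set. -/
lemma flag_adapted_basis {K V : Type*} [Field K] [AddCommGroup V] [Module K V]
    (e : Module.Basis ℕ K V) (F : ℕ → Submodule K V)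
    (hmono : ∀ k, F k ≤ F (k + 1)) (hdim : ∀ k, Module.finrank K (F k) = k)
    (heq : ∃ N, ∀ n ≥ N, F n = Submodule.span K (e '' {i | i < n})) :
    ∃ v : ℕ → V, LinearIndependent K v ∧ ⊤ ≤ Submodule.span K (Set.range v) ∧
      (∀ k, Submodule.span K (v '' {i | i < k}) = F k) ∧ {i | v i ≠ e i}.Finite := by
  obtain ⟨N, hN⟩ := heq
  have hm : Monotone F := monotone_nat_of_le_succ hmono
  -- every `F k` is finite dimensional
  have hfd : ∀ k, FiniteDimensional K (F k) := by
    intro k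
    have h1 : F k ≤ F (max k N) := hm (le_max_left _ _)
    have h2 : F (max k N) = Submodule.span K (e '' {i | i < max k N}) :=
      hN _ (le_max_right _ _)
    have : FiniteDimensional K (F (max k N)) := by
      rw [h2]
      exact FiniteDimensional.span_of_finite K ((Set.finite_Iio _).image e)
    exact Submodule.finiteDimensional_of_le h1
  -- strictness of the flag
  have hlt : ∀ k, F k < F (k + 1) := by
    intro k
    refine (hmono k).lt_of_ne fun h => ?_
    have h1 := hdim k
    rw [h, hdim] at h1
    omega
  have hex : ∀ k, ∃ x, x ∈ F (k + 1) ∧ x ∉ F k := by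
    intro k
    obtain ⟨x, hx1, hx2⟩ := SetLike.exists_of_lt (hlt k)
    exact ⟨x, hx1, hx2⟩
  choose w hw1 hw2 using hex
  set v : ℕ → V := fun k => if N ≤ k then e k else w k with hv
  have hv1 : ∀ k, v k ∈ F (k + 1) ∧ v k ∉ F k := by
    intro k
    by_cases h : N ≤ k
    · simp only [hv, if_pos h]
      constructor
      · rw [hN (k + 1) (by omega)]
        exact subset_span ⟨k, by simp, rfl⟩
      · rw [hN k h]
        exact e.linearIndependent.notMem_span_image (by simp)
    · simp only [hv, if_neg h]
      exact ⟨hw1 k, hw2 k⟩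
  -- spans of the initial segments
  have hspan : ∀ k, Submodule.span K (v '' {i | i < k}) = F k := by
    intro k
    induction k with
    | zero =>
      have : {i : ℕ | i < 0} = ∅ := by ext i; simp
      rw [this, Set.image_empty, Submodule.span_empty]
      haveI := hfd 0
      exact (Submodule.finrank_eq_zero.mp (hdim 0)).symm
    | succ k ih =>
      have hset : {i : ℕ | i < k + 1} = insert k {i : ℕ | i < k} := by
        ext i; simp; omega
      rw [hset, Set.image_insert_eq, Submodule.span_insert, ih]
      haveI := hfd (k + 1)
      have hle : Submodule.span K {v k} ⊔ F k ≤ F (k + 1) :=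
        sup_le ((Submodule.span_singleton_le_iff_mem _ _).mpr (hv1 k).1) (hmono k)
      haveI : FiniteDimensional K ↥(Submodule.span K {v k} ⊔ F k) :=
        Submodule.finiteDimensional_of_le hle
      have hstrict : F k < Submodule.span K {v k} ⊔ F k := by
        refine lt_of_le_of_ne le_sup_right fun h => ?_
        have : v k ∈ Submodule.span K {v k} ⊔ F k :=
          Submodule.mem_sup_left (Submodule.mem_span_singleton_self _)
        rw [← h] at this
        exact (hv1 k).2 this
      have hrank : k < Module.finrank K ↥(Submodule.span K {v k} ⊔ F k) := by
        have := Submodule.finrank_lt_finrank_of_lt hstrict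
        rwa [hdim] at this
      exact Submodule.eq_of_le_of_finrank_le hle (by rw [hdim]; omega)
  -- linear independence
  have hfin : ∀ n, LinearIndependent K (fun i : Fin n => v i) := by
    intro n
    induction n with
    | zero => exact linearIndependent_empty_type
    | succ n ih =>
      have hrange : Set.range (fun i : Fin n => v i) = v '' {i | i < n} := by
        ext x
        constructor
        · rintro ⟨i, rfl⟩; exact ⟨i, i.isLt, rfl⟩
        · rintro ⟨i, hi, rfl⟩; exact ⟨⟨i, hi⟩, rfl⟩
      have hx : v n ∉ Submodule.span K (Set.range (fun i : Fin n => v i)) := by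
        rw [hrange, hspan]; exact (hv1 n).2
      have heqf : (fun i : Fin (n + 1) => v i) = Fin.snoc (fun i : Fin n => v i) (v n) := by
        funext i
        refine Fin.lastCases ?_ ?_ i
        · simp [Fin.snoc_last]
        · intro j; simp [Fin.snoc_castSucc]
      rw [heqf]
      exact linearIndependent_fin_snoc.mpr ⟨ih, hx⟩
  have hli : LinearIndependent K v := by
    rw [linearIndependent_iff_finset_linearIndependent]
    intro s
    by_cases hs : s.Nonempty
    · set n := (s.max' hs) + 1 with hn
      have hlt : ∀ i ∈ s, i < n := fun i hi => by
        have := Finset.le_max' s i hi; omega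
      have hinj : Function.Injective (fun i : s => (⟨i, hlt i i.2⟩ : Fin n)) := by
        intro a b hab
        exact Subtype.ext (congrArg Fin.val hab)
      exact (hfin n).comp (fun i : s => (⟨i, hlt i i.2⟩ : Fin n)) hinj
    · rw [Finset.not_nonempty_iff_eq_empty] at hs
      subst hs
      exact linearIndependent_empty_type
  -- spanning
  have hsp : ⊤ ≤ Submodule.span K (Set.range v) := by
    rw [← e.span_eq]
    refine Submodule.span_le.mpr ?_
    rintro x ⟨i, rfl⟩
    have hn : max N (i + 1) ≥ N := le_max_left _ _
    have : e i ∈ F (max N (i + 1)) := by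
      rw [hN _ hn]
      exact subset_span ⟨i, lt_of_lt_of_le (Nat.lt_succ_self i) (le_max_right N (i + 1)), rfl⟩
    rw [← hspan (max N (i + 1))] at this
    exact Submodule.span_mono (Set.image_subset_range _ _) this
  refine ⟨v, hli, hsp, hspan, ?_⟩
  refine (Set.finite_Iio N).subset fun i hi => ?_
  by_contra h
  simp only [Set.mem_Iio, not_lt] at h
  exact hi (by simp [hv, if_pos h])

/-- `GL(E,V)` acts transitively on `Fl(F_E,E,V)`: for any two maximal ascending flags
equal to `F_E` in high positions there is an `E`-finitary automorphism mapping one to the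
other. -/
theorem stmt11 {K V : Type*} [Field K] [AddCommGroup V] [Module K V] (e : Module.Basis ℕ K V)
    (F' F'' : ℕ → Submodule K V)
    (hmono' : ∀ k, F' k ≤ F' (k + 1)) (hdim' : ∀ k, Module.finrank K (F' k) = k)
    (heq' : ∃ N, ∀ n ≥ N, F' n = Submodule.span K (e '' {i | i < n}))
    (hmono'' : ∀ k, F'' k ≤ F'' (k + 1)) (hdim'' : ∀ k, Module.finrank K (F'' k) = k)
    (heq'' : ∃ N, ∀ n ≥ N, F'' n = Submodule.span K (e '' {i | i < n})) :
    ∃ g : V ≃ₗ[K] V, {i : ℕ | g (e i) ≠ e i}.Finite ∧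
      ∀ k, (F' k).map (g : V →ₗ[K] V) = F'' k := by
  obtain ⟨v', hli', hsp', hspan', hfin'⟩ := flag_adapted_basis e F' hmono' hdim' heq'
  obtain ⟨v'', hli'', hsp'', hspan'', hfin''⟩ := flag_adapted_basis e F'' hmono'' hdim'' heq''
  set b' : Module.Basis ℕ K V := Module.Basis.mk hli' hsp' with hb'
  set b'' : Module.Basis ℕ K V := Module.Basis.mk hli'' hsp'' with hb''
  set g : V ≃ₗ[K] V := b'.equiv b'' (Equiv.refl ℕ) with hg
  have hgv : ∀ i, g (v' i) = v'' i := by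
    intro i
    have h1 : v' i = b' i := by rw [hb', Module.Basis.mk_apply]
    have h2 : v'' i = b'' i := by rw [hb'', Module.Basis.mk_apply]
    rw [h1, h2, hg, Module.Basis.equiv_apply, Equiv.refl_apply]
  refine ⟨g, ?_, ?_⟩
  · refine (hfin'.union hfin'').subset fun i hi => ?_
    by_contra h
    simp only [Set.mem_union, Set.mem_setOf_eq, not_or, not_not] at h
    obtain ⟨h1, h2⟩ := h
    exact hi (by rw [← h1, hgv, h2, h1])
  · intro k
    rw [← hspan' k, ← hspan'' k, Submodule.map_span]
    congr 1
    rw [← Set.image_comp]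
    refine Set.image_congr fun i _ => ?_
    exact hgv i
end

section
/- Let V be a countable-dimensional vector space over ℂ with basis E = {e_1, e_2, ...}, F_E^n = span{e_1,...,e_n}, and B_E the stabilizer in GL(V) of the flag (F_E^n)_{n≥1}. Then the subgroup GL(E,V)·B_E generated by GL(E,V) and B_E is a proper subgroup of GL(V). -/
section aux

variable {V : Type*} [AddCommGroup V] [Module ℂ V] (e : Module.Basis ℕ ℂ V)

/-- The flag `F n = span {e 0, ..., e (n-1)}`. -/
private def FF (n : ℕ) : Submodule ℂ V := Submodule.span ℂ (e '' {i | i < n})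

private lemma FF_mono : Monotone (FF e) := fun m n hmn =>
  Submodule.span_mono (Set.image_mono fun _ hi => lt_of_lt_of_le hi hmn)

private lemma basis_mem_FF_iff {j n : ℕ} : e j ∈ FF e n ↔ j < n := by
  simpa [FF] using e.self_mem_span_image (i := j) (s := {i | i < n})

private lemma exists_mem_FF (v : V) : ∃ m, v ∈ FF e m := by
  classical
  set s := (e.repr v).support with hs
  refine ⟨s.sup id + 1, ?_⟩
  have hv : (Finsupp.linearCombination ℂ e) (e.repr v) = v := e.linearCombination_repr v
  rw [← hv, Finsupp.linearCombination_apply, Finsupp.sum]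
  refine Submodule.sum_mem _ fun i hi => Submodule.smul_mem _ _ ?_
  refine Submodule.subset_span ⟨i, ?_, rfl⟩
  have : i ∈ s := hs ▸ hi
  exact Nat.lt_succ_of_le (Finset.le_sup (f := id) this)

/-- A finite set of vectors lies in a common `FF e C`. -/
private lemma exists_forall_mem_FF (s : Finset V) : ∃ C, ∀ v ∈ s, v ∈ FF e C := by
  classical
  choose f hf using exists_mem_FF e
  exact ⟨s.sup f, fun v hv => FF_mono e (Finset.le_sup hv) (hf v)⟩

/-- The subgroup of all `g` moving the flag only boundedly. -/
private def H : Subgroup (V ≃ₗ[ℂ] V) where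
  carrier := {g | ∃ C, ∀ n,
      (FF e n).map (g : V →ₗ[ℂ] V) ≤ FF e (n + C) ∧
      (FF e n).map (g.symm : V →ₗ[ℂ] V) ≤ FF e (n + C)}
  one_mem' := ⟨0, fun n => by
    constructor
    · rw [Nat.add_zero, show ((1 : V ≃ₗ[ℂ] V) : V →ₗ[ℂ] V) = LinearMap.id from rfl,
        Submodule.map_id]
    · rw [Nat.add_zero, show (((1 : V ≃ₗ[ℂ] V)).symm : V →ₗ[ℂ] V) = LinearMap.id from rfl,
        Submodule.map_id]⟩
  mul_mem' := by
    rintro a b ⟨Ca, ha⟩ ⟨Cb, hb⟩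
    refine ⟨Cb + Ca, fun n => ?_⟩
    constructor
    · have h1 : (FF e n).map ((a * b : V ≃ₗ[ℂ] V) : V →ₗ[ℂ] V)
          = ((FF e n).map (b : V →ₗ[ℂ] V)).map (a : V →ₗ[ℂ] V) := by
        ext x
        constructor
        · rintro ⟨y, hy, rfl⟩; exact ⟨b y, ⟨y, hy, rfl⟩, rfl⟩
        · rintro ⟨_, ⟨y, hy, rfl⟩, rfl⟩; exact ⟨y, hy, rfl⟩
      rw [h1]
      calc ((FF e n).map (b : V →ₗ[ℂ] V)).map (a : V →ₗ[ℂ] V)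
          ≤ (FF e (n + Cb)).map (a : V →ₗ[ℂ] V) := Submodule.map_mono (hb n).1
        _ ≤ FF e (n + Cb + Ca) := (ha (n + Cb)).1
        _ = FF e (n + (Cb + Ca)) := by rw [Nat.add_assoc]
    · have h1 : (FF e n).map (((a * b : V ≃ₗ[ℂ] V)).symm : V →ₗ[ℂ] V)
          = ((FF e n).map (a.symm : V →ₗ[ℂ] V)).map (b.symm : V →ₗ[ℂ] V) := by
        ext x
        constructor
        · rintro ⟨y, hy, rfl⟩; exact ⟨a.symm y, ⟨y, hy, rfl⟩, rfl⟩
        · rintro ⟨_, ⟨y, hy, rfl⟩, rfl⟩; exact ⟨y, hy, rfl⟩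
      rw [h1]
      calc ((FF e n).map (a.symm : V →ₗ[ℂ] V)).map (b.symm : V →ₗ[ℂ] V)
          ≤ (FF e (n + Ca)).map (b.symm : V →ₗ[ℂ] V) := Submodule.map_mono (ha n).2
        _ ≤ FF e (n + Ca + Cb) := (hb (n + Ca)).2
        _ = FF e (n + (Cb + Ca)) := by rw [Nat.add_assoc, Nat.add_comm Ca Cb]
  inv_mem' := by
    rintro a ⟨C, hC⟩
    exact ⟨C, fun n => ⟨(hC n).2, (hC n).1⟩⟩

end aux

/-- The subgroup of `GL(V)` generated by `GL(E,V)` (the `E`-finitary automorphisms) and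
`B_E` (the stabilizer of the flag `(F_E^n)ₙ`, `F_E^n = span{e 0,...,e (n-1)}`) is a proper
subgroup of `GL(V)`. -/
theorem stmt16 {V : Type*} [AddCommGroup V] [Module ℂ V] (e : Module.Basis ℕ ℂ V) :
    Subgroup.closure
      ({g : V ≃ₗ[ℂ] V | {i : ℕ | g (e i) ≠ e i}.Finite} ∪
       {g : V ≃ₗ[ℂ] V | ∀ n : ℕ, (Submodule.span ℂ (e '' {i | i < n})).map (g : V →ₗ[ℂ] V) =
         Submodule.span ℂ (e '' {i | i < n})}) ≠ ⊤ := by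
  classical
  intro htop
  -- the closure is contained in `H e`
  have hle : Subgroup.closure
      ({g : V ≃ₗ[ℂ] V | {i : ℕ | g (e i) ≠ e i}.Finite} ∪
       {g : V ≃ₗ[ℂ] V | ∀ n : ℕ, (Submodule.span ℂ (e '' {i | i < n})).map (g : V →ₗ[ℂ] V) =
         Submodule.span ℂ (e '' {i | i < n})}) ≤ H e := by
    rw [Subgroup.closure_le]
    rintro g (hg | hg)
    · -- finitary automorphisms
      have hsymm : ∀ i, g (e i) = e i → g.symm (e i) = e i := by
        intro i hi
        conv_lhs => rw [← hi]
        exact g.symm_apply_apply (e i)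
      obtain ⟨C, hC⟩ := exists_forall_mem_FF e
        (hg.toFinset.image (fun i => g (e i)) ∪ hg.toFinset.image (fun i => g.symm (e i)))
      refine ⟨C, fun n => ?_⟩
      constructor
      · rw [show (FF e n) = Submodule.span ℂ (e '' {i | i < n}) from rfl,
          Submodule.map_span, Submodule.span_le]
        rintro _ ⟨_, ⟨i, hi, rfl⟩, rfl⟩
        simp only [SetLike.mem_coe, LinearEquiv.coe_coe]
        by_cases hgi : g (e i) = e i
        · rw [hgi]
          exact (basis_mem_FF_iff e).2 (lt_of_lt_of_le hi (Nat.le_add_right n C))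
        · refine FF_mono e (Nat.le_add_left C n) (hC _ ?_)
          exact Finset.mem_union_left _ (Finset.mem_image.2 ⟨i, hg.mem_toFinset.2 hgi, rfl⟩)
      · rw [show (FF e n) = Submodule.span ℂ (e '' {i | i < n}) from rfl,
          Submodule.map_span, Submodule.span_le]
        rintro _ ⟨_, ⟨i, hi, rfl⟩, rfl⟩
        simp only [SetLike.mem_coe, LinearEquiv.coe_coe]
        by_cases hgi : g (e i) = e i
        · rw [hsymm i hgi]
          exact (basis_mem_FF_iff e).2 (lt_of_lt_of_le hi (Nat.le_add_right n C))
        · refine FF_mono e (Nat.le_add_left C n) (hC _ ?_)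
          exact Finset.mem_union_right _ (Finset.mem_image.2 ⟨i, hg.mem_toFinset.2 hgi, rfl⟩)
    · -- flag stabilizer
      refine ⟨0, fun n => ?_⟩
      have h1 : (FF e n).map (g : V →ₗ[ℂ] V) = FF e n := hg n
      have hcomp : (g.symm : V →ₗ[ℂ] V).comp (g : V →ₗ[ℂ] V) = LinearMap.id := by
        ext x; simp
      have h2 : (FF e n).map (g.symm : V →ₗ[ℂ] V) = FF e n := by
        conv_lhs => rw [← h1]
        rw [← Submodule.map_comp, hcomp, Submodule.map_id]
      simp [h1, h2]
  -- the permutation swapping `2^(2k)` and `2^(2k+1)`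
  have two_pow_inj : ∀ {a b : ℕ}, 2 ^ a = 2 ^ b → a = b :=
    fun h => Nat.pow_right_injective (le_refl 2) h
  classical
  set f : ℕ → ℕ := fun n =>
    if ∃ k, n = 2 ^ (2 * k) then 2 * n else if ∃ k, n = 2 ^ (2 * k + 1) then n / 2 else n with hf
  have hdisj : ∀ n, (∃ k, n = 2 ^ (2 * k)) → ¬ ∃ k, n = 2 ^ (2 * k + 1) := by
    rintro n ⟨k, rfl⟩ ⟨j, hj⟩
    have := two_pow_inj hj
    omega
  have hinv : Function.Involutive f := by
    intro n
    by_cases h1 : ∃ k, n = 2 ^ (2 * k)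
    · obtain ⟨k, hk⟩ := h1
      have e1 : f n = 2 * n := by simp only [hf]; rw [if_pos ⟨k, hk⟩]
      have h2n : 2 * n = 2 ^ (2 * k + 1) := by rw [hk]; ring
      have hno1 : ¬ ∃ j, 2 * n = 2 ^ (2 * j) := by
        rintro ⟨j, hj⟩
        have := two_pow_inj (h2n.symm.trans hj)
        omega
      have e2 : f (2 * n) = (2 * n) / 2 := by
        simp only [hf]; rw [if_neg hno1, if_pos ⟨k, h2n⟩]
      rw [e1, e2]; omega
    · by_cases h2 : ∃ k, n = 2 ^ (2 * k + 1)
      · obtain ⟨k, hk⟩ := h2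
        have e1 : f n = n / 2 := by simp only [hf]; rw [if_neg h1, if_pos ⟨k, hk⟩]
        have hhalf : n / 2 = 2 ^ (2 * k) := by
          rw [hk, pow_succ]; omega
        have e2 : f (n / 2) = 2 * (n / 2) := by
          simp only [hf]; rw [if_pos ⟨k, hhalf⟩]
        rw [e1, e2, hhalf, hk, pow_succ]; ring
      · have e1 : f n = n := by simp only [hf]; rw [if_neg h1, if_neg h2]
        rw [e1, e1]
  set σ : Equiv.Perm ℕ := hinv.toPerm f with hσ
  set g : V ≃ₗ[ℂ] V := e.equiv e σ with hg
  have hge : ∀ i, g (e i) = e (f i) := fun i => e.equiv_apply i e σ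
  have hgH : g ∈ H e := hle (htop ▸ Subgroup.mem_top g)
  obtain ⟨C, hC⟩ := hgH
  set m : ℕ := 2 ^ (2 * C) with hm
  have hmem : g (e m) ∈ (FF e (m + 1)).map (g : V →ₗ[ℂ] V) :=
    Submodule.mem_map_of_mem ((basis_mem_FF_iff e).2 (Nat.lt_succ_self m))
  have h2m : g (e m) = e (2 * m) := by
    rw [hge]
    congr 1
    simp only [hf]
    rw [if_pos ⟨C, hm⟩]
  have hlt : 2 * m < m + 1 + C := by
    have := (basis_mem_FF_iff e).1 ((hC (m + 1)).1 (h2m ▸ hmem))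
    exact this
  have hCm : C < m := lt_of_lt_of_le (Nat.lt_two_pow_self (n := C))
    (Nat.pow_le_pow_right (by norm_num) (by omega))
  omega
end
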